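/- For every prime p, the equation x² − 34·y² = −1 has a solution with x, y ∈ ℤ_p, and it has a real solution; hence x² − 34y² = −1 violates the integral Hasse principle. -/

import Mathlib

open Polynomial in
lemma padic_sqrt {p : ℕ} [Fact p.Prime] (c a : ℤ_[p]) (h : ‖a ^ 2 - c‖ < ‖2 * a‖ ^ 2) :
    ∃ x : ℤ_[p], x ^ 2 = c := by
  have e1 : (X ^ 2 - C c : ℤ_[p][X]).eval a = a ^ 2 - c := by simp
  have e2 : (X ^ 2 - C c : ℤ_[p][X]).derivative.eval a = 2 * a := by
    simp [derivative_sub, derivative_pow]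
  have h' : ‖(X ^ 2 - C c : ℤ_[p][X]).eval a‖ <
      ‖(X ^ 2 - C c : ℤ_[p][X]).derivative.eval a‖ ^ 2 := by rw [e1, e2]; exact h
  obtain ⟨z, hz, -⟩ := hensels_lemma h'
  refine ⟨z, ?_⟩
  rw [Polynomial.coe_aeval_eq_eval, Polynomial.eval_sub, Polynomial.eval_pow, Polynomial.eval_X, Polynomial.eval_C,
    sub_eq_zero] at hz
  exact hz

lemma norm_eq_one_of_toZMod_ne_zero {p : ℕ} [Fact p.Prime] {z : ℤ_[p]}
    (h : PadicInt.toZMod z ≠ 0) : ‖z‖ = 1 := by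
  refine le_antisymm (PadicInt.norm_le_one z) (not_lt.mp fun hlt => h ?_)
  have : z ∈ IsLocalRing.maximalIdeal ℤ_[p] := by
    rw [PadicInt.maximalIdeal_eq_span_p, Ideal.mem_span_singleton]
    exact (PadicInt.norm_lt_one_iff_dvd z).mp hlt
  rw [← PadicInt.ker_toZMod] at this
  exact this

lemma norm_lt_one_of_toZMod_eq_zero {p : ℕ} [Fact p.Prime] {z : ℤ_[p]}
    (h : PadicInt.toZMod z = 0) : ‖z‖ < 1 := by
  rw [PadicInt.norm_lt_one_iff_dvd, ← Ideal.mem_span_singleton,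
    ← PadicInt.maximalIdeal_eq_span_p, ← PadicInt.ker_toZMod]
  exact h

lemma padic_sqrt_of_zmod {p : ℕ} [hp : Fact p.Prime] (hodd : p ≠ 2) (c : ℤ_[p]) (x₀ : ZMod p)
    (h0 : x₀ ≠ 0) (hc : PadicInt.toZMod c = x₀ ^ 2) : ∃ x : ℤ_[p], x ^ 2 = c := by
  set a : ℤ_[p] := ((x₀.val : ℕ) : ℤ_[p]) with ha_def
  have ha : PadicInt.toZMod a = x₀ := by
    rw [ha_def, map_natCast]
    exact ZMod.natCast_rightInverse x₀
  have h1 : ‖a ^ 2 - c‖ < 1 := by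
    apply norm_lt_one_of_toZMod_eq_zero
    rw [map_sub, map_pow, ha, hc, sub_self]
  have h2 : ‖2 * a‖ = 1 := by
    apply norm_eq_one_of_toZMod_ne_zero
    rw [map_mul, ha]
    have two_ne : (PadicInt.toZMod (2 : ℤ_[p])) ≠ 0 := by
      rw [map_ofNat]
      have : ((2 : ℕ) : ZMod p) ≠ 0 := by
        rw [Ne, ZMod.natCast_eq_zero_iff]
        intro hdvd
        exact hodd ((Nat.prime_dvd_prime_iff_eq hp.out Nat.prime_two).mp hdvd)
      simpa using this
    exact mul_ne_zero two_ne h0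
  exact padic_sqrt c a (by rw [h2, one_pow]; exact h1)

lemma isSquare_neg_one_zmod17 : IsSquare (-1 : ZMod 17) := by decide

lemma padic_odd_case {p : ℕ} [hp : Fact p.Prime] (hodd : p ≠ 2) :
    ∃ x y : ℤ_[p], x ^ 2 - 34 * y ^ 2 = -1 := by
  have hfield : (34 : ℤ_[p]) = ((34 : ℕ) : ℤ_[p]) := by norm_num
  by_cases hsq : IsSquare (-1 : ZMod p)
  · -- x² = -1, y = 0
    obtain ⟨r, hr⟩ := hsq
    have hr0 : r ≠ 0 := by rintro rfl; simp at hr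
    obtain ⟨x, hx⟩ := padic_sqrt_of_zmod hodd (-1) r hr0 (by rw [map_neg, map_one, hr]; ring)
    exact ⟨x, 0, by rw [hx]; ring⟩
  · have h17 : p ≠ 17 := by
      intro hpe
      subst hpe
      exact hsq isSquare_neg_one_zmod17
    have h34 : ((34 : ℕ) : ZMod p) ≠ 0 := by
      rw [Ne, ZMod.natCast_eq_zero_iff]
      intro hdvd
      have := (Nat.Prime.dvd_mul hp.out).mp (show p ∣ 2 * 17 from hdvd)
      rcases this with h | h
      · exact hodd ((Nat.prime_dvd_prime_iff_eq hp.out Nat.prime_two).mp h)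
      · exact h17 ((Nat.prime_dvd_prime_iff_eq hp.out (by norm_num)).mp h)
    have h34' : (34 : ZMod p) ≠ 0 := by simpa using h34
    have toZ34 : PadicInt.toZMod (34 : ℤ_[p]) = (34 : ZMod p) := by
      rw [map_ofNat]
    by_cases h34sq : IsSquare ((34 : ZMod p))
    · -- 34 = s², x = 0, y = 1/s
      obtain ⟨r, hr⟩ := h34sq
      have hr0 : r ≠ 0 := by rintro rfl; rw [mul_zero] at hr; exact h34' hr
      obtain ⟨s, hs⟩ := padic_sqrt_of_zmod hodd 34 r hr0 (by rw [toZ34, hr]; ring)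
      have hsu : IsUnit s := by
        rw [PadicInt.isUnit_iff]
        have : ‖s‖ ^ 2 = 1 := by
          rw [← norm_pow, hs]
          exact norm_eq_one_of_toZMod_ne_zero (by rw [toZ34]; exact h34')
        nlinarith [norm_nonneg s]
      obtain ⟨u, hu⟩ := hsu
      have hs' : (u : ℤ_[p]) ^ 2 = 34 := by rw [hu]; exact hs
      have hui : (u : ℤ_[p]) * ↑u⁻¹ = 1 := u.mul_inv
      refine ⟨0, ↑u⁻¹, ?_⟩
      linear_combination (((u⁻¹ : ℤ_[p]ˣ) : ℤ_[p]) ^ 2) * hs' -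
        ((u : ℤ_[p]) * ↑u⁻¹ + 1) * hui
    · -- -34 = s²
      have hchar : IsSquare ((-34 : ZMod p)) := by
        have hm1 : quadraticChar (ZMod p) (-1) = -1 :=
          quadraticChar_neg_one_iff_not_isSquare.mpr hsq
        have h34c : quadraticChar (ZMod p) 34 = -1 :=
          quadraticChar_neg_one_iff_not_isSquare.mpr h34sq
        have : quadraticChar (ZMod p) (-34) = 1 := by
          rw [show (-34 : ZMod p) = -1 * 34 by ring, map_mul, hm1, h34c]; ring
        exact (quadraticChar_one_iff_isSquare (by simpa using h34')).mp this
      obtain ⟨r, hr⟩ := hchar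
      have hr0 : r ≠ 0 := by
        rintro rfl; rw [mul_zero] at hr
        exact h34' (neg_eq_zero.mp hr)
      obtain ⟨s, hs⟩ := padic_sqrt_of_zmod hodd (-34) r hr0
        (by rw [map_neg, toZ34, hr]; ring)
      have hsu : IsUnit s := by
        rw [PadicInt.isUnit_iff]
        have : ‖s‖ ^ 2 = 1 := by
          rw [← norm_pow, hs, norm_neg]
          exact norm_eq_one_of_toZMod_ne_zero (by rw [toZ34]; exact h34')
        nlinarith [norm_nonneg s]
      obtain ⟨u, hu⟩ := hsu
      have hs' : (u : ℤ_[p]) ^ 2 = -34 := by rw [hu]; exact hs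
      have hui : (u : ℤ_[p]) * ↑u⁻¹ = 1 := u.mul_inv
      -- a² + b² = -1 mod p
      obtain ⟨a, b, hab⟩ := ZMod.sq_add_sq p (-1 : ZMod p)
      have ha0 : a ≠ 0 := by
        rintro rfl
        rw [zero_pow two_ne_zero, zero_add] at hab
        exact hsq ⟨b, by rw [← hab]; ring⟩
      set z : ℤ_[p] := ((b.val : ℕ) : ℤ_[p]) with hz_def
      have hz : PadicInt.toZMod z = b := by
        rw [hz_def, map_natCast]; exact ZMod.natCast_rightInverse b
      obtain ⟨x, hx⟩ := padic_sqrt_of_zmod hodd (-1 - z ^ 2) a ha0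
        (by rw [map_sub, map_neg, map_one, map_pow, hz]; linear_combination -hab)
      refine ⟨x, z * ↑u⁻¹, ?_⟩
      linear_combination hx + (-(z ^ 2 * ((u⁻¹ : ℤ_[p]ˣ) : ℤ_[p]) ^ 2)) * hs' +
        (z ^ 2 * ((u : ℤ_[p]) * ↑u⁻¹ + 1)) * hui

lemma padic_two_case {p : ℕ} [hp : Fact p.Prime] (h2 : p = 2) :
    ∃ x y : ℤ_[p], x ^ 2 - 34 * y ^ 2 = -1 := by
  subst h2
  have hnp : ‖((2 : ℕ) : ℤ_[2])‖ = (2 : ℝ)⁻¹ := by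
    simpa using (PadicInt.norm_p (p := 2))
  have hval : ((1 : ℤ_[2]) ^ 2 - 33) = -(((2 : ℕ) : ℤ_[2]) ^ 5) := by
    push_cast; norm_num
  have hnorm : ‖(1 : ℤ_[2]) ^ 2 - 33‖ < ‖2 * (1 : ℤ_[2])‖ ^ 2 := by
    rw [hval, norm_neg, norm_pow, hnp, mul_one]
    have h2n : ‖(2 : ℤ_[2])‖ = (2 : ℝ)⁻¹ := by
      rw [show (2 : ℤ_[2]) = ((2 : ℕ) : ℤ_[2]) by push_cast; ring]
      exact hnp
    rw [h2n]
    norm_num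
  obtain ⟨x, hx⟩ := padic_sqrt 33 1 hnorm
  exact ⟨x, 1, by rw [hx]; ring⟩

lemma no_int_solution_aux :
    ∀ n : ℕ, ∀ x y : ℤ, 0 ≤ x → 0 ≤ y → y.toNat = n → x ^ 2 - 34 * y ^ 2 = -1 → False := by
  intro n
  induction n using Nat.strong_induction_on with
  | _ n ih =>
    intro x y hx hy hyn h
    have h' : x * x = 34 * (y * y) - 1 := by linear_combination h
    by_cases hy6 : y ≤ 6
    · have hxb : x ≤ 35 := by nlinarith
      interval_cases y <;> interval_cases x <;> omega
    · push_neg at hy6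
      have h1 : 6 * x < 35 * y := by nlinarith
      have h2 : 204 * y ≤ 35 * x := by nlinarith
      have h3 : 34 * y < 6 * x := by nlinarith
      refine ih (35 * y - 6 * x).toNat (by omega) (35 * x - 204 * y) (35 * y - 6 * x)
        (by omega) (by omega) rfl ?_
      linear_combination h

/-- The equation `x² − 34·y² = −1` has a solution in `ℤ_p` for every prime `p`
and a solution in `ℝ`, but no solution in `ℤ`: it violates the integral Hasse
principle. -/
theorem neg_pell_34_violates_integral_Hasse_principle :
    (∀ (p : ℕ) (_ : Fact p.Prime), ∃ x y : ℤ_[p], x ^ 2 - 34 * y ^ 2 = -1) ∧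
    (∃ x y : ℝ, x ^ 2 - 34 * y ^ 2 = -1) ∧
    ¬ ∃ x y : ℤ, x ^ 2 - 34 * y ^ 2 = -1 := by
  refine ⟨?_, ?_, ?_⟩
  · intro p hp
    by_cases h2 : p = 2
    · exact padic_two_case h2
    · exact padic_odd_case h2
  · refine ⟨0, Real.sqrt (1 / 34), ?_⟩
    rw [Real.sq_sqrt (by norm_num)]
    norm_num
  · rintro ⟨x, y, h⟩
    exact no_int_solution_aux (|y|).toNat |x| |y| (abs_nonneg x) (abs_nonneg y) rfl
      (by rw [sq_abs, sq_abs]; exact h)
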